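/- Proposition 2 (the split maximizing the mi score occurs at the coordinate of a point within a bin; interval form): suppose the fixed observed counts satisfy (o_+, o_−) ≠ (0, 0). Then for all real numbers a, b, c with l_s < a < c < b < u_s, the mi-score change satisfies δ_mi(c) < max(δ_mi(a), δ_mi(b)). Consequently, on any closed subinterval of (l_s, u_s) between consecutive observation coordinates (where o_+ and o_− are constant), the maximum of δ_mi is attained at an endpoint of the subinterval, so the split maximizing the mi score must occur at the coordinate of a point within the bin. -/

import Mathlib

/-- The mi score of a bin with observed count `o` and expected count `e`,
for total sample size `n`: `mi(o, e) = (o/n)·log(o/e)`.  The convention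
`0·log 0 = 0` holds automatically since `Real.log 0 = 0`. -/
noncomputable def miScore (n o e : ℝ) : ℝ := (o / n) * Real.log (o / e)

/-- The change in total mi score due to a vertical split of the bin
`(ls, us] × (lt, ut]` at coordinate `c`, with fixed observed counts `op`
above and `om` below the split, and total sample size `n`. -/
noncomputable def deltaMi (ls us lt ut n op om : ℝ) (c : ℝ) : ℝ :=
  miScore n op ((us - c) * (ut - lt) / n) +
  miScore n om ((c - ls) * (ut - lt) / n) -
  miScore n (op + om) ((us - ls) * (ut - lt) / n)

/-- Auxiliary: the mi score of a split piece with width `x` decomposes as a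
`-log x` term plus a constant (in `x`) term. -/
lemma miScore_term_eq (n K o x : ℝ) (hn : 0 < n) (hK : 0 < K) (ho : 0 ≤ o)
    (hx : 0 < x) :
    miScore n o (x * K / n) =
      -(o / n) * Real.log x + (o / n) * (Real.log o - Real.log (K / n)) := by
  rcases eq_or_lt_of_le ho with h | h
  · simp [miScore, ← h]
  · have hKn : (0:ℝ) < K / n := div_pos hK hn
    have h1 : x * K / n = x * (K / n) := by ring
    unfold miScore
    rw [h1, Real.log_div h.ne' (by positivity), Real.log_mul hx.ne' hKn.ne']
    ring

/-- Proposition 2 (interval form): if `(op, om) ≠ (0, 0)`, then for any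
`ls < a < c < b < us` the mi-score change at `c` is strictly less than the
maximum of the changes at `a` and `b`; hence on any closed subinterval between
consecutive observation coordinates the maximum is attained at an endpoint. -/
theorem mi_split_max_at_point (ls us lt ut n op om : ℝ)
    (hlu : ls < us) (hlt : lt < ut) (hn : 0 < n)
    (hop : 0 ≤ op) (hom : 0 ≤ om) (hne : ¬(op = 0 ∧ om = 0)) :
    ∀ a b c : ℝ, ls < a → a < c → c < b → b < us →
      deltaMi ls us lt ut n op om c <
        max (deltaMi ls us lt ut n op om a) (deltaMi ls us lt ut n op om b) := by
  intro a b c ha hac hcb hbu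
  have hK : 0 < ut - lt := by linarith
  -- rewrite deltaMi as F + const on (ls, us)
  set C : ℝ := (op / n) * (Real.log op - Real.log ((ut - lt) / n)) +
      (om / n) * (Real.log om - Real.log ((ut - lt) / n)) -
      miScore n (op + om) ((us - ls) * (ut - lt) / n) with hC
  set F : ℝ → ℝ := fun x => -(op / n) * Real.log (us - x) - (om / n) * Real.log (x - ls)
    with hF
  have hrw : ∀ x : ℝ, ls < x → x < us → deltaMi ls us lt ut n op om x = F x + C := by
    intro x h1 h2
    have e1 := miScore_term_eq n (ut - lt) op (us - x) hn hK hop (by linarith)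
    have e2 := miScore_term_eq n (ut - lt) om (x - ls) hn hK hom (by linarith)
    simp only [deltaMi, e1, e2, hF, hC]
    ring
  rw [hrw a ha (by linarith), hrw b (by linarith) hbu, hrw c (by linarith) (by linarith)]
  have hmax : max (F a + C) (F b + C) = max (F a) (F b) + C := max_add_add_right _ _ _
  rw [hmax, add_lt_add_iff_right]
  -- convex combination
  set t : ℝ := (b - c) / (b - a) with ht
  set s : ℝ := (c - a) / (b - a) with hs
  have hba : 0 < b - a := by linarith
  have htpos : 0 < t := div_pos (by linarith) hba
  have hspos : 0 < s := div_pos (by linarith) hba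
  have hts : t + s = 1 := by
    rw [ht, hs, ← add_div, div_eq_one_iff_eq hba.ne']; ring
  have hcomb : c = t * a + s * b := by
    rw [ht, hs]; field_simp; ring
  -- strict concavity of log
  have key : ∀ x y : ℝ, 0 < x → 0 < y → x ≠ y →
      t * Real.log x + s * Real.log y < Real.log (t * x + s * y) := by
    intro x y hx hy hxy
    have := strictConcaveOn_log_Ioi.2 (Set.mem_Ioi.2 hx) (Set.mem_Ioi.2 hy) hxy
      htpos hspos hts
    simpa using this
  have h1 : t * Real.log (us - a) + s * Real.log (us - b) < Real.log (us - c) := by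
    have := key (us - a) (us - b) (by linarith) (by linarith) (by intro h; linarith [hcb])
    have e : t * (us - a) + s * (us - b) = us - c := by
      linear_combination us * hts + hcomb
    rwa [e] at this
  have h2 : t * Real.log (a - ls) + s * Real.log (b - ls) < Real.log (c - ls) := by
    have := key (a - ls) (b - ls) (by linarith) (by linarith) (by intro h; linarith)
    have e : t * (a - ls) + s * (b - ls) = c - ls := by
      linear_combination (-ls) * hts - hcomb
    rwa [e] at this
  have hA : 0 ≤ op / n := div_nonneg hop hn.le
  have hB : 0 ≤ om / n := div_nonneg hom hn.le
  have hstep : F c < t * F a + s * F b := by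
    have hABexpand : t * F a + s * F b =
        -(op / n) * (t * Real.log (us - a) + s * Real.log (us - b)) -
        (om / n) * (t * Real.log (a - ls) + s * Real.log (b - ls)) := by
      simp only [hF]; ring
    rw [hABexpand]
    have hop' : op ≠ 0 ∨ om ≠ 0 := by tauto
    rcases hop' with h | h
    · have hApos : 0 < op / n := div_pos (lt_of_le_of_ne hop (Ne.symm h)) hn
      have i1 : -(op / n) * Real.log (us - c) <
          -(op / n) * (t * Real.log (us - a) + s * Real.log (us - b)) := by
        have := mul_lt_mul_of_pos_left h1 hApos
        linarith
      have i2 : -(om / n) * Real.log (c - ls) ≤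
          -(om / n) * (t * Real.log (a - ls) + s * Real.log (b - ls)) := by
        have := mul_le_mul_of_nonneg_left h2.le hB
        linarith
      simp only [hF]
      linarith
    · have hBpos : 0 < om / n := div_pos (lt_of_le_of_ne hom (Ne.symm h)) hn
      have i1 : -(op / n) * Real.log (us - c) ≤
          -(op / n) * (t * Real.log (us - a) + s * Real.log (us - b)) := by
        have := mul_le_mul_of_nonneg_left h1.le hA
        linarith
      have i2 : -(om / n) * Real.log (c - ls) <
          -(om / n) * (t * Real.log (a - ls) + s * Real.log (b - ls)) := by
        have := mul_lt_mul_of_pos_left h2 hBpos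
        linarith
      simp only [hF]
      linarith
  calc F c < t * F a + s * F b := hstep
    _ ≤ t * max (F a) (F b) + s * max (F a) (F b) := by
        gcongr
        exacts [le_max_left _ _, le_max_right _ _]
    _ = max (F a) (F b) := by rw [← add_mul, hts, one_mul]
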